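/- Fix q ∈ ℝ^d and suppose that for each α ∈ ℝ^d, T(α) denotes a real number such that E[∑_{i=1}^N exp(⟨q, X_i - α⟩ - T(α) φ_i)] = 1, where the φ_i are positive random variables. Then α ↦ T(α) is convex: for α₀, α₁ ∈ ℝ^d and θ ∈ [0,1], T(θα₀ + (1-θ)α₁) ≤ θT(α₀) + (1-θ)T(α₁). -/

import Mathlib

open MeasureTheory
open scoped RealInnerProductSpace

/-- Convexity of `α ↦ P̃_{X,φ,α}(q)`: if for each `α`, `T α` satisfies
`E[∑_{i=1}^N exp (⟪q, X i - α⟫ - T α * φ i)] = 1` where the `φ i` are positive, then `T` is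
convex: `T (θ • α₀ + (1-θ) • α₁) ≤ θ * T α₀ + (1-θ) * T α₁` for `θ ∈ [0,1]`. -/
theorem pressure_convex_in_alpha {d : ℕ} {Ω : Type*} [MeasurableSpace Ω]
    (μ : Measure Ω) [IsProbabilityMeasure μ]
    (N : Ω → ℕ) (hN : ∀ ω, 1 ≤ N ω) (hNmeas : Measurable N)
    (X : ℕ → Ω → EuclideanSpace ℝ (Fin d)) (hXmeas : ∀ i, Measurable (X i))
    (φ : ℕ → Ω → ℝ) (hφmeas : ∀ i, Measurable (φ i))
    (hφpos : ∀ᵐ ω ∂μ, ∀ i ∈ Finset.Icc 1 (N ω), 0 < φ i ω)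
    (hmom : ∀ q' : EuclideanSpace ℝ (Fin d), ∀ t : ℝ,
      Integrable (fun ω => ∑ i ∈ Finset.Icc 1 (N ω),
        Real.exp (⟪q', X i ω⟫ - t * φ i ω)) μ)
    (q : EuclideanSpace ℝ (Fin d)) (T : EuclideanSpace ℝ (Fin d) → ℝ)
    (hT : ∀ α : EuclideanSpace ℝ (Fin d),
      (∫ ω, ∑ i ∈ Finset.Icc 1 (N ω),
        Real.exp (⟪q, X i ω - α⟫ - T α * φ i ω) ∂μ) = 1) :
    ∀ (α₀ α₁ : EuclideanSpace ℝ (Fin d)), ∀ θ ∈ Set.Icc (0:ℝ) 1,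
      T (θ • α₀ + (1 - θ) • α₁) ≤ θ * T α₀ + (1 - θ) * T α₁ := by
  intro α₀ α₁ θ hθ
  obtain ⟨hθ0, hθ1⟩ := hθ
  set α₂ := θ • α₀ + (1 - θ) • α₁ with hα₂
  set t₂ := θ * T α₀ + (1 - θ) * T α₁ with ht₂
  -- integrability of the general integrand
  have hInt : ∀ (α : EuclideanSpace ℝ (Fin d)) (t : ℝ),
      Integrable (fun ω => ∑ i ∈ Finset.Icc 1 (N ω),
        Real.exp (⟪q, X i ω - α⟫ - t * φ i ω)) μ := by
    intro α t
    have hfun : (fun ω => ∑ i ∈ Finset.Icc 1 (N ω),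
        Real.exp (⟪q, X i ω - α⟫ - t * φ i ω))
        = fun ω => Real.exp (-⟪q, α⟫) * ∑ i ∈ Finset.Icc 1 (N ω),
            Real.exp (⟪q, X i ω⟫ - t * φ i ω) := by
      funext ω
      rw [Finset.mul_sum]
      refine Finset.sum_congr rfl fun i _ => ?_
      rw [← Real.exp_add, inner_sub_right]
      ring_nf
    rw [hfun]
    exact (hmom q t).const_mul _
  -- exponent identity
  have hexp : ∀ (i : ℕ) (ω : Ω),
      ⟪q, X i ω - α₂⟫ - t₂ * φ i ω
        = θ * (⟪q, X i ω - α₀⟫ - T α₀ * φ i ω)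
          + (1 - θ) * (⟪q, X i ω - α₁⟫ - T α₁ * φ i ω) := by
    intro i ω
    simp only [hα₂, ht₂, inner_sub_right, inner_add_right, real_inner_smul_right]
    ring
  -- the value at the convex combination is at most 1
  have hle1 : (∫ ω, ∑ i ∈ Finset.Icc 1 (N ω),
      Real.exp (⟪q, X i ω - α₂⟫ - t₂ * φ i ω) ∂μ) ≤ 1 := by
    have hptw : ∀ ω, (∑ i ∈ Finset.Icc 1 (N ω),
        Real.exp (⟪q, X i ω - α₂⟫ - t₂ * φ i ω))
        ≤ θ * (∑ i ∈ Finset.Icc 1 (N ω),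
            Real.exp (⟪q, X i ω - α₀⟫ - T α₀ * φ i ω))
          + (1 - θ) * (∑ i ∈ Finset.Icc 1 (N ω),
            Real.exp (⟪q, X i ω - α₁⟫ - T α₁ * φ i ω)) := by
      intro ω
      rw [Finset.mul_sum, Finset.mul_sum, ← Finset.sum_add_distrib]
      refine Finset.sum_le_sum fun i _ => ?_
      rw [hexp i ω]
      exact convexOn_exp.2 (Set.mem_univ _) (Set.mem_univ _) hθ0 (by linarith)
        (by ring)
    have hintsum : Integrable (fun ω =>
        θ * (∑ i ∈ Finset.Icc 1 (N ω),
            Real.exp (⟪q, X i ω - α₀⟫ - T α₀ * φ i ω))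
          + (1 - θ) * (∑ i ∈ Finset.Icc 1 (N ω),
            Real.exp (⟪q, X i ω - α₁⟫ - T α₁ * φ i ω))) μ :=
      ((hInt α₀ (T α₀)).const_mul θ).add ((hInt α₁ (T α₁)).const_mul (1 - θ))
    calc (∫ ω, ∑ i ∈ Finset.Icc 1 (N ω),
          Real.exp (⟪q, X i ω - α₂⟫ - t₂ * φ i ω) ∂μ)
        ≤ ∫ ω, (θ * (∑ i ∈ Finset.Icc 1 (N ω),
            Real.exp (⟪q, X i ω - α₀⟫ - T α₀ * φ i ω))
          + (1 - θ) * (∑ i ∈ Finset.Icc 1 (N ω),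
            Real.exp (⟪q, X i ω - α₁⟫ - T α₁ * φ i ω))) ∂μ :=
          integral_mono (hInt α₂ t₂) hintsum hptw
      _ = θ * 1 + (1 - θ) * 1 := by
          rw [integral_add ((hInt α₀ (T α₀)).const_mul θ)
            ((hInt α₁ (T α₁)).const_mul (1 - θ)),
            integral_const_mul, integral_const_mul, hT, hT]
      _ = 1 := by ring
  -- conclude by monotonicity in t
  by_contra hcon
  push_neg at hcon
  -- hcon : t₂ < T α₂
  set g := fun ω => ∑ i ∈ Finset.Icc 1 (N ω),
      Real.exp (⟪q, X i ω - α₂⟫ - t₂ * φ i ω) with hg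
  set h := fun ω => ∑ i ∈ Finset.Icc 1 (N ω),
      Real.exp (⟪q, X i ω - α₂⟫ - T α₂ * φ i ω) with hh
  have hlt : ∀ᵐ ω ∂μ, h ω < g ω := by
    filter_upwards [hφpos] with ω hω
    refine Finset.sum_lt_sum_of_nonempty
      ⟨1, Finset.mem_Icc.2 ⟨le_refl 1, hN ω⟩⟩ fun i hi => ?_
    have hφi := hω i hi
    have : t₂ * φ i ω < T α₂ * φ i ω :=
      mul_lt_mul_of_pos_right hcon hφi
    exact Real.exp_lt_exp.2 (by linarith)
  have hnonneg : 0 ≤ᵐ[μ] fun ω => g ω - h ω :=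
    hlt.mono fun ω hω => by simp; linarith
  have hint0 : (∫ ω, (g ω - h ω) ∂μ) = 0 := by
    have := hT α₂
    rw [integral_sub (hInt α₂ t₂) (hInt α₂ (T α₂))]
    have h1 : (∫ ω, h ω ∂μ) = 1 := hT α₂
    have h2 : (∫ ω, g ω ∂μ) ≤ 1 := hle1
    have h3 : (0:ℝ) ≤ ∫ ω, (g ω - h ω) ∂μ := integral_nonneg_of_ae hnonneg
    rw [integral_sub (hInt α₂ t₂) (hInt α₂ (T α₂))] at h3
    linarith
  have hzero : (fun ω => g ω - h ω) =ᵐ[μ] 0 :=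
    (integral_eq_zero_iff_of_nonneg_ae hnonneg
      ((hInt α₂ t₂).sub (hInt α₂ (T α₂)))).mp hint0
  have : ∀ᵐ ω ∂μ, False := by
    filter_upwards [hlt, hzero] with ω h1 h2
    simp only [Pi.zero_apply] at h2
    linarith
  obtain ⟨ω, hω⟩ := this.exists
  exact hω
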